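/- For the optimal profile ṽ_ε(s) = tanh(−3s/(4ε)) and any shift δ ∈ ℝ, the shifted-profile mismatch satisfies ε·∫_ℝ (ṽ_ε(s) − ṽ_ε(s−δ))² ds = δ²·(1 + Θ(δ,ε)) where |Θ(δ,ε)| ≤ C·(|δ|/ε + δ²/ε²) for a universal constant C > 0. -/

import Mathlib

open MeasureTheory Real Filter Set Topology

lemma tanh_sub_tanh' (x y : ℝ) :
    Real.tanh x - Real.tanh y = Real.sinh (x - y) / (Real.cosh x * Real.cosh y) := by
  rw [Real.tanh_eq_sinh_div_cosh, Real.tanh_eq_sinh_div_cosh, Real.sinh_sub]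
  field_simp [(Real.cosh_pos x).ne', (Real.cosh_pos y).ne']

noncomputable def hh (c x : ℝ) : ℝ := (Real.tanh x - Real.tanh (x - c)) ^ 2

lemma hh_eq (c x : ℝ) : hh c x = Real.sinh c ^ 2 / (Real.cosh x ^ 2 * Real.cosh (x - c) ^ 2) := by
  rw [hh, tanh_sub_tanh', sub_sub_cancel, div_pow, mul_pow]

lemma sq_le_sinh_sq (x : ℝ) : x ^ 2 ≤ Real.sinh x ^ 2 := by
  rcases le_or_gt 0 x with h | h
  · have := Real.self_le_sinh_iff.mpr h
    nlinarith
  · have : -x ≤ Real.sinh (-x) := Real.self_le_sinh_iff.mpr (by linarith)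
    rw [Real.sinh_neg] at this
    nlinarith

lemma hh_le (c x : ℝ) : hh c x ≤ Real.sinh c ^ 2 * (1 + x ^ 2)⁻¹ := by
  rw [hh_eq, div_eq_mul_inv]
  have h1 : (1:ℝ) + x ^ 2 ≤ Real.cosh x ^ 2 * Real.cosh (x - c) ^ 2 := by
    have h2 : (1:ℝ) + x ^ 2 ≤ Real.cosh x ^ 2 := by
      rw [Real.cosh_sq]
      nlinarith [sq_le_sinh_sq x]
    have h3 : (1:ℝ) ≤ Real.cosh (x - c) ^ 2 := by
      nlinarith [Real.one_le_cosh (x - c)]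
    nlinarith [sq_nonneg x]
  gcongr

lemma continuous_hh (c : ℝ) : Continuous (hh c) := by
  have ht : Continuous Real.tanh := by
    have : Real.tanh = fun x => Real.sinh x / Real.cosh x := funext Real.tanh_eq_sinh_div_cosh
    rw [this]
    exact Real.continuous_sinh.div Real.continuous_cosh fun x => (Real.cosh_pos x).ne'
  exact ((ht.sub (ht.comp (continuous_id.sub continuous_const))).pow 2)

lemma integrable_hh (c : ℝ) : Integrable (hh c) := by
  refine (integrable_inv_one_add_sq.const_mul (Real.sinh c ^ 2)).mono'
    (continuous_hh c).aestronglyMeasurable ?_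
  filter_upwards with x
  rw [Real.norm_eq_abs, abs_of_nonneg (by rw [hh]; positivity)]
  exact hh_le c x


noncomputable def FF (c x : ℝ) : ℝ :=
  2 * Real.cosh c / Real.sinh c * (Real.log (Real.cosh x) - Real.log (Real.cosh (x - c)))
    - Real.tanh x - Real.tanh (x - c)

lemma hasDerivAt_tanh' (x : ℝ) : HasDerivAt Real.tanh (1 / Real.cosh x ^ 2) x := by
  have h : HasDerivAt (fun y => Real.sinh y / Real.cosh y)
      ((Real.cosh x * Real.cosh x - Real.sinh x * Real.sinh x) / Real.cosh x ^ 2) x :=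
    (Real.hasDerivAt_sinh x).div (Real.hasDerivAt_cosh x) (Real.cosh_pos x).ne'
  have e : Real.tanh = fun y => Real.sinh y / Real.cosh y := funext Real.tanh_eq_sinh_div_cosh
  rw [e]
  convert h using 1
  have e := Real.cosh_sq_sub_sinh_sq x
  congr 1
  linear_combination -e

lemma hasDerivAt_logcosh (x : ℝ) :
    HasDerivAt (fun y => Real.log (Real.cosh y)) (Real.tanh x) x := by
  have h := (Real.hasDerivAt_cosh x).log (Real.cosh_pos x).ne'
  simpa [Real.tanh_eq_sinh_div_cosh] using h

lemma hasDerivAt_FF (c : ℝ) (hc : c ≠ 0) (x : ℝ) :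
    HasDerivAt (FF c) ((Real.tanh x - Real.tanh (x - c)) ^ 2) x := by
  have hsc : Real.sinh c ≠ 0 := Real.sinh_ne_zero.mpr hc
  have h1 : HasDerivAt (fun y : ℝ => y - c) 1 x := (hasDerivAt_id x).sub_const c
  have h2 : HasDerivAt (fun y => Real.log (Real.cosh (y - c))) (Real.tanh (x - c)) x := by
    simpa [Function.comp_def] using (hasDerivAt_logcosh (x - c)).comp x h1
  have h3 : HasDerivAt (fun y => Real.tanh (y - c)) (1 / Real.cosh (x - c) ^ 2) x := by
    simpa [Function.comp_def] using (hasDerivAt_tanh' (x - c)).comp x h1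
  have h4 : HasDerivAt (FF c)
      (2 * Real.cosh c / Real.sinh c * (Real.tanh x - Real.tanh (x - c))
        - 1 / Real.cosh x ^ 2 - 1 / Real.cosh (x - c) ^ 2) x :=
    ((((hasDerivAt_logcosh x).sub h2).const_mul _).sub (hasDerivAt_tanh' x)).sub h3
  convert h4 using 1
  -- algebraic identity
  have e1 := Real.cosh_sub x (x - c); rw [sub_sub_cancel] at e1
  have e2 := Real.sinh_sub x (x - c); rw [sub_sub_cancel] at e2
  have e3 := Real.cosh_sq x
  have e4 := Real.cosh_sq (x - c)
  have hx := (Real.cosh_pos x).ne'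
  have hu := (Real.cosh_pos (x - c)).ne'
  have key : Real.tanh x - Real.tanh (x - c)
      = Real.sinh c / (Real.cosh x * Real.cosh (x - c)) := by
    rw [tanh_sub_tanh', sub_sub_cancel]
  rw [key]
  rw [e1, e2]
  rw [e2] at hsc
  field_simp
  linear_combination (-(Real.cosh (x-c)^2)) * e3 +
    (-(Real.cosh x^2)) * e4

lemma tendsto_tanh_atTop : Tendsto Real.tanh atTop (𝓝 1) := by
  have key : ∀ x : ℝ, Real.tanh x = 1 - Real.exp (-x) / Real.cosh x := by
    intro x
    rw [Real.tanh_eq_sinh_div_cosh]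
    field_simp
    linarith [Real.cosh_sub_sinh x]
  have h : Tendsto (fun x => Real.exp (-x) / Real.cosh x) atTop (𝓝 0) :=
    squeeze_zero (g := fun x : ℝ => Real.exp (-x)) (fun t => by positivity)
      (fun t => div_le_self (Real.exp_pos _).le (Real.one_le_cosh t))
      (Real.tendsto_exp_atBot.comp tendsto_neg_atTop_atBot)
  have := (tendsto_const_nhds (x := (1:ℝ)) (f := atTop)).sub h
  rw [sub_zero] at this
  exact this.congr fun x => (key x).symm

lemma tendsto_tanh_atBot : Tendsto Real.tanh atBot (𝓝 (-1)) := by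
  have key : ∀ x : ℝ, Real.tanh x = -1 + Real.exp x / Real.cosh x := by
    intro x
    rw [Real.tanh_eq_sinh_div_cosh]
    field_simp
    linarith [Real.sinh_add_cosh x]
  have h : Tendsto (fun x : ℝ => Real.exp x / Real.cosh x) atBot (𝓝 0) :=
    squeeze_zero (g := fun x : ℝ => Real.exp x) (fun t => by positivity)
      (fun t => div_le_self (Real.exp_pos _).le (Real.one_le_cosh t))
      Real.tendsto_exp_atBot
  have := (tendsto_const_nhds (x := (-1:ℝ)) (f := atBot)).add h
  rw [add_zero] at this
  exact this.congr fun x => (key x).symm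

lemma logcosh (x : ℝ) :
    Real.log (Real.cosh x) = x + Real.log (1 + Real.exp (-2*x)) - Real.log 2 := by
  have h1 : Real.cosh x = Real.exp x * (1 + Real.exp (-2*x)) / 2 := by
    rw [Real.cosh_eq]
    have h2 : Real.exp (-2*x) = Real.exp (-x) * Real.exp (-x) := by
      rw [← Real.exp_add]; ring_nf
    rw [h2, Real.exp_neg]
    field_simp
  rw [h1, Real.log_div (by positivity) (by norm_num),
    Real.log_mul (Real.exp_ne_zero x) (by positivity), Real.log_exp]

lemma tendsto_log_one_add_exp : Tendsto (fun u : ℝ => Real.log (1 + Real.exp u)) atBot (𝓝 0) := by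
  have h2 : Tendsto (fun u : ℝ => 1 + Real.exp u) atBot (𝓝 1) := by
    simpa using Real.tendsto_exp_atBot.const_add 1
  have := (Real.continuousAt_log one_ne_zero).tendsto.comp h2
  simpa [Function.comp_def] using this

lemma tendsto_logdiff_atTop (c : ℝ) :
    Tendsto (fun x => Real.log (Real.cosh x) - Real.log (Real.cosh (x - c))) atTop (𝓝 c) := by
  have h2x : Tendsto (fun x : ℝ => 2*x) atTop atTop :=
    tendsto_id.const_mul_atTop two_pos
  have hneg2 : Tendsto (fun x : ℝ => -2*x) atTop atBot :=
    (tendsto_neg_atTop_atBot.comp h2x).congr fun x => by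
      show -(2*x) = -2*x; ring
  have hgen : Tendsto (fun x : ℝ => Real.log (1 + Real.exp (-2*x))) atTop (𝓝 0) :=
    tendsto_log_one_add_exp.comp hneg2
  have hshift : Tendsto (fun x : ℝ => x - c) atTop atTop :=
    tendsto_atTop_add_const_right _ (-c) tendsto_id
  have hgen2 : Tendsto (fun x : ℝ => Real.log (1 + Real.exp (-2*(x - c)))) atTop (𝓝 0) :=
    hgen.comp hshift
  have key : ∀ x : ℝ, Real.log (Real.cosh x) - Real.log (Real.cosh (x - c))
      = c + (Real.log (1 + Real.exp (-2*x)) - Real.log (1 + Real.exp (-2*(x-c)))) := by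
    intro x; rw [logcosh, logcosh]; ring
  have := ((hgen.sub hgen2).const_add c)
  rw [sub_zero, add_zero] at this
  exact this.congr fun x => (key x).symm

lemma tendsto_logdiff_atBot (c : ℝ) :
    Tendsto (fun x => Real.log (Real.cosh x) - Real.log (Real.cosh (x - c))) atBot (𝓝 (-c)) := by
  have h2x : Tendsto (fun x : ℝ => 2*x) atBot atBot :=
    tendsto_id.const_mul_atBot two_pos
  have hgen : Tendsto (fun x : ℝ => Real.log (1 + Real.exp (2*x))) atBot (𝓝 0) :=
    tendsto_log_one_add_exp.comp h2x
  have hshift : Tendsto (fun x : ℝ => x - c) atBot atBot :=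
    tendsto_atBot_add_const_right _ (-c) tendsto_id
  have hgen2 : Tendsto (fun x : ℝ => Real.log (1 + Real.exp (2*(x - c)))) atBot (𝓝 0) :=
    hgen.comp hshift
  have logcosh' : ∀ x : ℝ,
      Real.log (Real.cosh x) = -x + Real.log (1 + Real.exp (2*x)) - Real.log 2 := by
    intro x
    have := logcosh (-x)
    rw [Real.cosh_neg] at this
    rw [this]; ring_nf
  have key : ∀ x : ℝ, Real.log (Real.cosh x) - Real.log (Real.cosh (x - c))
      = -c + (Real.log (1 + Real.exp (2*x)) - Real.log (1 + Real.exp (2*(x-c)))) := by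
    intro x; rw [logcosh', logcosh']; ring
  have := ((hgen.sub hgen2).const_add (-c))
  rw [sub_zero, add_zero] at this
  exact this.congr fun x => (key x).symm

lemma integral_hh (c : ℝ) (hc : c ≠ 0) :
    ∫ x, hh c x = 4 * (c * Real.cosh c / Real.sinh c - 1) := by
  have hshiftT : Tendsto (fun x : ℝ => x - c) atTop atTop :=
    tendsto_atTop_add_const_right _ (-c) tendsto_id
  have hshiftB : Tendsto (fun x : ℝ => x - c) atBot atBot :=
    tendsto_atBot_add_const_right _ (-c) tendsto_id
  have htop : Tendsto (FF c) atTop (𝓝 (2 * Real.cosh c / Real.sinh c * c - 1 - 1)) := by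
    exact (((tendsto_logdiff_atTop c).const_mul _).sub tendsto_tanh_atTop).sub
      (tendsto_tanh_atTop.comp hshiftT)
  have hbot : Tendsto (FF c) atBot (𝓝 (2 * Real.cosh c / Real.sinh c * (-c) - (-1) - (-1))) := by
    exact (((tendsto_logdiff_atBot c).const_mul _).sub tendsto_tanh_atBot).sub
      (tendsto_tanh_atBot.comp hshiftB)
  have := integral_of_hasDerivAt_of_tendsto (hasDerivAt_FF c hc) (integrable_hh c) hbot htop
  rw [show hh c = fun x => (Real.tanh x - Real.tanh (x - c)) ^ 2 from rfl] at *
  rw [this]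
  ring


lemma nonneg_on_Icc (f f' : ℝ → ℝ) (hf : ∀ x, HasDerivAt f (f' x) x) (h0 : f 0 = 0)
    (hd : ∀ x ∈ Icc (0:ℝ) 1, 0 ≤ f' x) : ∀ c ∈ Icc (0:ℝ) 1, 0 ≤ f c := by
  intro c hc
  have hmono : MonotoneOn f (Icc 0 1) := by
    apply monotoneOn_of_deriv_nonneg (convex_Icc 0 1)
      (fun x _ => (hf x).continuousAt.continuousWithinAt)
      (fun x _ => (hf x).differentiableAt.differentiableWithinAt)
    intro x hx
    rw [interior_Icc] at hx
    rw [(hf x).deriv]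
    exact hd x (Ioo_subset_Icc_self hx)
  have := hmono (left_mem_Icc.mpr one_pos.le) hc hc.1
  rwa [h0] at this

lemma cosh_one_le_two : Real.cosh 1 ≤ 2 := by
  rw [Real.cosh_eq]
  have h1 := Real.exp_one_lt_d9
  have h2 : Real.exp (-1) < 1 := by
    calc Real.exp (-1) < Real.exp 0 := Real.exp_lt_exp.mpr (by norm_num)
    _ = 1 := Real.exp_zero
  norm_num
  linarith

-- (i)
lemma phi_nonneg : ∀ c ∈ Icc (0:ℝ) 1, 0 ≤ c * Real.cosh c - Real.sinh c := by
  apply nonneg_on_Icc _ (fun x => x * Real.sinh x)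
  · intro x
    have h := ((hasDerivAt_id x).mul (Real.hasDerivAt_cosh x)).sub (Real.hasDerivAt_sinh x)
    simp only [id_eq] at h
    refine h.congr_deriv ?_
    ring
  · simp
  · intro x hx
    exact mul_nonneg hx.1 (Real.sinh_nonneg_iff.mpr hx.1)

-- (ii)
lemma phi_le : ∀ c ∈ Icc (0:ℝ) 1, c * Real.cosh c - Real.sinh c ≤ 2/3 * c ^ 3 := by
  have key := nonneg_on_Icc (fun c => 2/3 * c^3 - (c * Real.cosh c - Real.sinh c))
    (fun x => 2 * x^2 - x * Real.sinh x) ?_ (by norm_num) ?_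
  · intro c hc; linarith [key c hc]
  · intro x
    have h := (((hasDerivAt_pow 3 x).const_mul (2/3:ℝ)).sub
      (((hasDerivAt_id x).mul (Real.hasDerivAt_cosh x)).sub (Real.hasDerivAt_sinh x)))
    simp only [id_eq] at h
    refine h.congr_deriv ?_
    push_cast
    ring
  · intro x hx
    have h1 : Real.sinh x ≤ x * Real.cosh x := by linarith [phi_nonneg x hx]
    have h2 : Real.cosh x ≤ 2 := by
      calc Real.cosh x ≤ Real.cosh 1 := by
            rw [Real.cosh_le_cosh, abs_of_nonneg hx.1, abs_one]; exact hx.2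
      _ ≤ 2 := cosh_one_le_two
    show 0 ≤ 2 * x^2 - x * Real.sinh x
    nlinarith [mul_le_mul_of_nonneg_left h1 hx.1,
      mul_le_mul_of_nonneg_right h2 (mul_self_nonneg x)]

-- (iv) g ≤ 0
lemma g_nonpos : ∀ c ∈ Icc (0:ℝ) 1,
    c * Real.cosh c - (1 + c^2/3) * Real.sinh c ≤ 0 := by
  have key := nonneg_on_Icc (fun c => (1 + c^2/3) * Real.sinh c - c * Real.cosh c)
    (fun x => x/3 * (x * Real.cosh x - Real.sinh x)) ?_ (by norm_num) ?_
  · intro c hc; linarith [key c hc]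
  · intro x
    have h := ((((hasDerivAt_pow 2 x).div_const 3).const_add (1:ℝ)).mul
        (Real.hasDerivAt_sinh x)).sub
      ((hasDerivAt_id x).mul (Real.hasDerivAt_cosh x))
    simp only [id_eq] at h
    refine h.congr_deriv ?_
    push_cast
    ring
  · intro x hx
    exact mul_nonneg (by linarith [hx.1]) (by linarith [phi_nonneg x hx])

-- (iii) g ≥ -(2/45) c^5
lemma g_lower : ∀ c ∈ Icc (0:ℝ) 1,
    -(2/45) * c^5 ≤ c * Real.cosh c - (1 + c^2/3) * Real.sinh c := by
  have key := nonneg_on_Icc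
    (fun c => 2/45 * c^5 + (c * Real.cosh c - (1 + c^2/3) * Real.sinh c))
    (fun x => 2/9 * x^4 - x/3 * (x * Real.cosh x - Real.sinh x)) ?_ (by norm_num) ?_
  · intro c hc; linarith [key c hc]
  · intro x
    have h := (((hasDerivAt_pow 5 x).const_mul (2/45:ℝ)).add
      (((hasDerivAt_id x).mul (Real.hasDerivAt_cosh x)).sub
        ((((hasDerivAt_pow 2 x).div_const 3).const_add (1:ℝ)).mul
          (Real.hasDerivAt_sinh x))))
    simp only [id_eq] at h
    refine h.congr_deriv ?_
    push_cast
    ring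
  · intro x hx
    have h1 := phi_le x hx
    have h2 : (0:ℝ) ≤ x := hx.1
    show 0 ≤ 2/9 * x^4 - x/3 * (x * Real.cosh x - Real.sinh x)
    nlinarith [mul_le_mul_of_nonneg_left h1 h2, pow_nonneg h2 4, pow_nonneg h2 3]

lemma keypos (c : ℝ) (hc : 0 < c) :
    |4 * (c * Real.cosh c / Real.sinh c - 1) - 4/3 * c^2| ≤ 16 * c^2 * (|c| + c^2) := by
  have hs : 0 < Real.sinh c := Real.sinh_pos_iff.mpr hc
  have hcs : c ≤ Real.sinh c := Real.self_le_sinh_iff.mpr hc.le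
  rw [abs_of_pos hc]
  rcases le_or_gt c 1 with hle | hgt
  · have hmem : c ∈ Icc (0:ℝ) 1 := ⟨hc.le, hle⟩
    have hg1 := g_nonpos c hmem
    have hg2 := g_lower c hmem
    have hE : 4 * (c * Real.cosh c / Real.sinh c - 1) - 4/3 * c^2
        = 4 * (c * Real.cosh c - (1 + c^2/3) * Real.sinh c) / Real.sinh c := by
      field_simp
      ring
    rw [hE]
    rw [abs_div, abs_of_pos hs]
    have habs : |4 * (c * Real.cosh c - (1 + c^2/3) * Real.sinh c)| ≤ 4 * (2/45 * c^5) := by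
      rw [abs_mul, abs_of_nonneg (by norm_num : (0:ℝ) ≤ 4)]
      have : |c * Real.cosh c - (1 + c^2/3) * Real.sinh c| ≤ 2/45 * c^5 := by
        rw [abs_le]
        constructor
        · linarith
        · have : 0 ≤ 2/45 * c^5 := by positivity
          linarith
      linarith
    calc |4 * (c * Real.cosh c - (1 + c^2/3) * Real.sinh c)| / Real.sinh c
        ≤ 4 * (2/45 * c^5) / Real.sinh c := by gcongr
      _ ≤ 4 * (2/45 * c^5) / c := by gcongr
      _ = 8/45 * c^4 := by field_simp; ring
      _ ≤ 16 * c^2 * (c + c^2) := by nlinarith [pow_pos hc 3, pow_pos hc 4]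
  · have hexp : Real.exp (-c) ≤ 1 := by
      calc Real.exp (-c) ≤ Real.exp 0 := Real.exp_le_exp.mpr (by linarith)
      _ = 1 := Real.exp_zero
    have hcs2 : Real.cosh c ≤ 2 * Real.sinh c := by
      have := Real.cosh_sub_sinh c
      linarith
    have ht2 : c * Real.cosh c / Real.sinh c ≤ 2 * c := by
      rw [div_le_iff₀ hs]
      nlinarith
    have ht1 : c ≤ c * Real.cosh c / Real.sinh c := by
      rw [le_div_iff₀ hs]
      have : Real.sinh c ≤ Real.cosh c := by
        have := Real.cosh_sub_sinh c
        nlinarith [Real.exp_pos (-c)]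
      nlinarith
    rw [abs_le]
    constructor
    · nlinarith
    · nlinarith

lemma key_ineq (c : ℝ) (hc : c ≠ 0) :
    |4 * (c * Real.cosh c / Real.sinh c - 1) - 4/3 * c^2| ≤ 16 * c^2 * (|c| + c^2) := by
  rcases hc.lt_or_gt with h | h
  · have := keypos (-c) (by linarith)
    rw [Real.cosh_neg, Real.sinh_neg, abs_neg] at this
    have e : -c * Real.cosh c / -Real.sinh c = c * Real.cosh c / Real.sinh c := by
      rw [div_eq_div_iff (by simp [Real.sinh_ne_zero.mpr hc]) (Real.sinh_ne_zero.mpr hc)]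
      ring
    rw [e] at this
    simpa using this
  · exact keypos c h

/-- Shifted-profile mismatch: there is a universal constant `C > 0` such that
for all `ε > 0` and all shifts `δ`,
`|ε·∫_ℝ (ṽ_ε(s) − ṽ_ε(s−δ))² ds − δ²| ≤ C·δ²·(|δ|/ε + δ²/ε²)`,
where `ṽ_ε(s) = tanh(−3s/(4ε))`. -/
theorem shifted_profile_mismatch :
    ∃ C : ℝ, 0 < C ∧ ∀ ε : ℝ, 0 < ε → ∀ δ : ℝ,
      |ε * (∫ s : ℝ,
          (Real.tanh (-(3 * s) / (4 * ε)) - Real.tanh (-(3 * (s - δ)) / (4 * ε))) ^ 2)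
        - δ ^ 2| ≤ C * δ ^ 2 * (|δ| / ε + δ ^ 2 / ε ^ 2) := by
  refine ⟨16, by norm_num, ?_⟩
  intro ε hε δ
  rcases eq_or_ne δ 0 with rfl | hδ
  · simp
  · have hε' : ε ≠ 0 := hε.ne'
    set a : ℝ := 3 / (4 * ε) with ha
    have ha0 : 0 < a := by positivity
    set c : ℝ := a * δ with hcdef
    have hc0 : c ≠ 0 := mul_ne_zero ha0.ne' hδ
    have hint : ∀ s : ℝ,
        (Real.tanh (-(3 * s) / (4 * ε)) - Real.tanh (-(3 * (s - δ)) / (4 * ε))) ^ 2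
          = hh (-c) (-a * s) := by
      intro s
      rw [hh]
      congr 2
      · congr 1
        rw [ha]; field_simp
      · congr 1
        rw [hcdef, ha]; field_simp; ring
    have hintegral : (∫ s : ℝ,
        (Real.tanh (-(3 * s) / (4 * ε)) - Real.tanh (-(3 * (s - δ)) / (4 * ε))) ^ 2)
        = a⁻¹ * (4 * (c * Real.cosh c / Real.sinh c - 1)) := by
      rw [show (fun s : ℝ =>
          (Real.tanh (-(3 * s) / (4 * ε)) - Real.tanh (-(3 * (s - δ)) / (4 * ε))) ^ 2)
          = fun s : ℝ => hh (-c) (-a * s) from funext hint]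
      rw [MeasureTheory.Measure.integral_comp_mul_left (hh (-c)) (-a)]
      rw [integral_hh (-c) (neg_ne_zero.mpr hc0)]
      rw [abs_inv, abs_neg, abs_of_pos ha0]
      rw [Real.cosh_neg, Real.sinh_neg]
      rw [smul_eq_mul, neg_mul, neg_div_neg_eq]
    rw [hintegral]
    have h1 : ε * (a⁻¹ * (4 * (c * Real.cosh c / Real.sinh c - 1))) - δ ^ 2
        = (4 * ε ^ 2 / 3) * ((4 * (c * Real.cosh c / Real.sinh c - 1)) - 4/3 * c ^ 2) := by
      rw [hcdef, ha]
      field_simp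
    rw [h1, abs_mul, abs_of_pos (by positivity : (0:ℝ) < 4 * ε ^ 2 / 3)]
    have h2 := key_ineq c hc0
    have hcabs : |c| = 3 * |δ| / (4 * ε) := by
      rw [hcdef, ha, abs_mul, abs_div, abs_of_pos (by positivity : (0:ℝ) < 4 * ε),
        abs_of_nonneg (by norm_num : (0:ℝ) ≤ 3), div_mul_eq_mul_div]
    have hcsq : c ^ 2 = 9 * δ ^ 2 / (16 * ε ^ 2) := by
      rw [hcdef, ha]; field_simp; ring
    calc (4 * ε ^ 2 / 3) * |4 * (c * Real.cosh c / Real.sinh c - 1) - 4/3 * c ^ 2|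
        ≤ (4 * ε ^ 2 / 3) * (16 * c ^ 2 * (|c| + c ^ 2)) := by gcongr
      _ ≤ 16 * δ ^ 2 * (|δ| / ε + δ ^ 2 / ε ^ 2) := by
          rw [hcabs, hcsq]
          have hd : (0:ℝ) ≤ |δ| := abs_nonneg δ
          have hkey : 16 * δ ^ 2 * (|δ| / ε + δ ^ 2 / ε ^ 2)
              - 4 * ε ^ 2 / 3 * (16 * (9 * δ ^ 2 / (16 * ε ^ 2))
                * (3 * |δ| / (4 * ε) + 9 * δ ^ 2 / (16 * ε ^ 2)))
              = 7 * δ ^ 2 * |δ| / ε + 37/4 * δ ^ 4 / ε ^ 2 := by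
            field_simp
            ring
          nlinarith [div_nonneg (mul_nonneg (mul_nonneg (by norm_num : (0:ℝ) ≤ 7) (sq_nonneg δ)) hd) hε.le,
            div_nonneg (by positivity : (0:ℝ) ≤ 37/4 * δ ^ 4) (sq_nonneg ε)]
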